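/- Let n ≥ 3 be an integer and k an integer with k ≥ 2. For the cycle graph C_n on n vertices: if k > ⌊n/2⌋ then CV_k(C_n) = 0, and if k ≤ ⌊n/2⌋ then CV_k(C_n) = ⌊(n+k)/(k+1)⌋. -/

import Mathlib

open SimpleGraph
open Fin.NatCast Fin.CommRing

/-- A graph is in a *failure state* for `k` if every connected component has
diameter less than `k`, i.e. every pair of mutually reachable vertices is at
distance less than `k`. -/
def FailureState {V : Type*} (G : SimpleGraph V) (k : ℕ) : Prop :=
  ∀ u v : V, G.Reachable u v → G.dist u v < k

/-- `G` contains `m` pairwise vertex-disjoint paths of length `k`. -/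
def HasDisjointPaths {V : Type*} (G : SimpleGraph V) (k m : ℕ) : Prop :=
  ∃ (u v : Fin m → V) (P : ∀ i, G.Walk (u i) (v i)),
    (∀ i, (P i).IsPath ∧ (P i).length = k) ∧
    ∀ i j, i ≠ j → ∀ x, x ∈ (P i).support → x ∉ (P j).support

/-- The `k`-diameter component vertex connectivity: the minimum size of a set of
vertices whose deletion leaves every component with diameter less than `k`. -/
noncomputable def CV {V : Type*} (G : SimpleGraph V) (k : ℕ) : ℕ :=
  sInf {n | ∃ V' : Finset V, V'.card = n ∧
    FailureState (G.induce ((V' : Set V))ᶜ) k}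

/-- The `k`-diameter component edge connectivity: the minimum size of a set of
edges whose deletion leaves every component with diameter less than `k`. -/
noncomputable def CE {V : Type*} (G : SimpleGraph V) (k : ℕ) : ℕ :=
  sInf {n | ∃ E' : Finset (Sym2 V), (E' : Set (Sym2 V)) ⊆ G.edgeSet ∧ E'.card = n ∧
    FailureState (G.deleteEdges (E' : Set (Sym2 V))) k}

/-- The `k`-diameter component connectivity function: the minimum over all
`p`-element vertex sets `V'` of `CE k (G - V')`. -/
noncomputable def CM {V : Type*} (G : SimpleGraph V) (k p : ℕ) : ℕ :=
  sInf {q | ∃ V' : Finset V, V'.card = p ∧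
    CE (G.induce ((V' : Set V))ᶜ) k = q}

lemma cyc_exists_walk {n : ℕ} [NeZero n] (hn : 3 ≤ n) (u : Fin n) (d : ℕ) :
    ∃ w : (cycleGraph n).Walk u (u + (d : Fin n)),
      w.length = d ∧ ∀ x ∈ w.support, ∃ j ≤ d, x = u + (j : Fin n) := by
  induction d with
  | zero =>
    refine ⟨Walk.nil.copy rfl (by simp), by simp, ?_⟩
    intro x hx
    simp only [Walk.support_copy, Walk.support_nil, List.mem_singleton] at hx
    exact ⟨0, le_refl _, by simp [hx]⟩
  | succ d ih =>
    obtain ⟨w, hlen, hsup⟩ := ih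
    have hadj : (cycleGraph n).Adj (u + (d : Fin n)) (u + ((d+1 : ℕ) : Fin n)) := by
      rw [cycleGraph_adj']
      right
      have e : (u + ((d+1 : ℕ) : Fin n)) - (u + ((d:ℕ) : Fin n)) = 1 := by push_cast; ring
      rw [e, Fin.val_one' n, Nat.mod_eq_of_lt (by omega)]
    refine ⟨w.concat hadj, by simp [hlen], ?_⟩
    intro x hx
    rw [Walk.support_concat, List.mem_append] at hx
    rcases hx with hx | hx
    · obtain ⟨j, hj, hxe⟩ := hsup x hx
      exact ⟨j, by omega, hxe⟩
    · simp only [List.mem_singleton] at hx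
      exact ⟨d+1, le_refl _, hx⟩

lemma cyc_walk_sub {n : ℕ} [NeZero n] (hn : 3 ≤ n) {u v : Fin n}
    (w : (cycleGraph n).Walk u v) :
    ∃ a b : ℕ, a + b = w.length ∧ (a : Fin n) - (b : Fin n) = v - u := by
  induction w with
  | nil => exact ⟨0, 0, by simp, by simp⟩
  | @cons u x v h p ih =>
    obtain ⟨a, b, hab, hs⟩ := ih
    rw [cycleGraph_adj'] at h
    have h1 : (1 : Fin n).val = 1 := by rw [Fin.val_one' n, Nat.mod_eq_of_lt (by omega)]
    rcases h with h | h
    · have hux : u - x = 1 := by apply Fin.ext; rw [h, h1]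
      refine ⟨a, b+1, by rw [Walk.length_cons]; omega, ?_⟩
      push_cast
      linear_combination hs + hux
    · have hxu : x - u = 1 := by apply Fin.ext; rw [h, h1]
      refine ⟨a+1, b, by rw [Walk.length_cons]; omega, ?_⟩
      push_cast
      linear_combination hs - hxu

lemma walk_induce {V : Type*} {G : SimpleGraph V} {s : Set V} :
    ∀ {u v : V} (w : G.Walk u v), (∀ x ∈ w.support, x ∈ s) → ∀ (hu : u ∈ s) (hv : v ∈ s),
    ∃ w' : (G.induce s).Walk ⟨u, hu⟩ ⟨v, hv⟩, w'.length = w.length := by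
  intro u v w
  induction w with
  | nil => exact fun _ hu hv => ⟨Walk.nil, rfl⟩
  | @cons u x v h p ih =>
    intro hs hu hv
    have hx : x ∈ s := hs x (by simp)
    obtain ⟨w', hw'⟩ := ih (fun y hy => hs y (by simp [hy])) hx hv
    have hadj : (G.induce s).Adj ⟨u, hu⟩ ⟨x, hx⟩ := h
    exact ⟨Walk.cons hadj w', by simp [hw']⟩

lemma dist_le_induce_dist {V : Type*} {G : SimpleGraph V} {s : Set V} {u v : ↥s}
    (h : (G.induce s).Reachable u v) :
    G.Reachable (u : V) (v : V) ∧ G.dist (u : V) (v : V) ≤ (G.induce s).dist u v := by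
  obtain ⟨p, hp⟩ := h.exists_walk_length_eq_dist
  let f : G.induce s →g G := ⟨Subtype.val, fun h => h⟩
  have hl : (p.map f).length = p.length := Walk.length_map _ _
  exact ⟨⟨p.map f⟩, by rw [← hp, ← hl]; exact SimpleGraph.dist_le _⟩

lemma fin_sub_val_add {n : ℕ} [NeZero n] (hn : 3 ≤ n) {x y : Fin n} (h : x ≠ y) :
    (x - y).val + (y - x).val = n := by
  have h0 : (x - y) + (y - x) = 0 := by ring
  have hv : ((x - y) + (y - x)).val = ((x-y).val + (y-x).val) % n := Fin.val_add _ _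
  rw [h0] at hv
  have hv0 : ((x-y).val + (y-x).val) % n = 0 := by simpa using hv.symm
  have h1' : (x - y).val ≠ 0 := fun hc => (sub_ne_zero_of_ne h) (Fin.ext hc)
  have h2' : (y - x).val ≠ 0 := fun hc => (sub_ne_zero_of_ne h.symm) (Fin.ext hc)
  have b1 : (x - y).val < n := (x - y).isLt
  have b2 : (y - x).val < n := (y - x).isLt
  obtain ⟨c, hc⟩ := (Nat.dvd_iff_mod_eq_zero.mpr hv0 : n ∣ _)
  have hcc : c < 2 := by
    by_contra hcon
    push_neg at hcon
    have : n * 2 ≤ n * c := Nat.mul_le_mul_left n hcon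
    omega
  interval_cases c <;> omega

/-- if all the vertices `u+j` for `j ≤ (v-u).val` are in `s`, then in the
induced graph `u` and `v` are reachable with distance at most `(v-u).val`. -/
lemma induce_dist_le {n : ℕ} [NeZero n] (hn : 3 ≤ n) {s : Set (Fin n)} (u v : ↥s)
    (h : ∀ j ≤ ((v : Fin n) - u).val, ((u : Fin n) + (j : Fin n)) ∈ s) :
    ((cycleGraph n).induce s).Reachable u v ∧
    ((cycleGraph n).induce s).dist u v ≤ ((v : Fin n) - u).val := by
  set d := ((v : Fin n) - u).val with hd
  obtain ⟨w, hlen, hsup⟩ := cyc_exists_walk hn (u : Fin n) d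
  have hx : (u : Fin n) + (d : Fin n) = (v : Fin n) := by
    rw [hd, Fin.cast_val_eq_self]
    ring
  have hsub : ∀ x ∈ (w.copy rfl hx).support, x ∈ s := by
    intro x hxs
    rw [Walk.support_copy] at hxs
    obtain ⟨j, hj, rfl⟩ := hsup x hxs
    exact h j hj
  obtain ⟨w', hw'⟩ := walk_induce (w.copy rfl hx) hsub u.2 v.2
  refine ⟨⟨w'⟩, ?_⟩
  calc ((cycleGraph n).induce s).dist u v ≤ w'.length := SimpleGraph.dist_le _
  _ = d := by rw [hw', Walk.length_copy, hlen]
lemma card_multiples_filter {n q : ℕ} (hn : 1 ≤ n) (hq : 1 ≤ q) :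
    (Finset.univ.filter (fun v : Fin n => q ∣ v.val)).card = (n - 1) / q + 1 := by
  rw [← Finset.card_range ((n-1)/q + 1)]
  apply Finset.card_nbij (fun v : Fin n => v.val / q)
  · intro a ha
    simp only [Finset.mem_range]
    have h1 : a.val ≤ n - 1 := by have := a.isLt; omega
    have h2 := Nat.div_le_div_right (c := q) h1
    exact Finset.mem_coe.mpr (Finset.mem_range.mpr (Nat.lt_succ_of_le h2))
  · intro a ha b hb hab
    simp only [Finset.coe_filter, Set.mem_setOf_eq, Finset.mem_univ, true_and] at ha hb
    have h1 := Nat.div_mul_cancel ha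
    have h2 := Nat.div_mul_cancel hb
    apply Fin.ext
    simp only at hab
    rw [← h1, ← h2, hab]
  · intro j hj
    simp only [Finset.mem_coe, Finset.mem_range] at hj
    have hjq : j * q ≤ n - 1 := by
      calc j * q ≤ (n-1)/q * q := Nat.mul_le_mul_right q (by omega)
      _ ≤ n - 1 := Nat.div_mul_le_self _ _
    refine ⟨⟨j * q, by omega⟩, ?_, ?_⟩
    · simp only [Finset.coe_filter, Set.mem_setOf_eq, Finset.mem_univ, true_and]
      exact ⟨j, Nat.mul_comm j q⟩
    · exact Nat.mul_div_left j hq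

example : True := trivial

/-- For the cycle graph on `n ≥ 3` vertices: `CV k (C n) = 0`
if `k > ⌊n / 2⌋`, and `CV k (C n) = ⌊(n + k) / (k + 1)⌋` if `k ≤ ⌊n / 2⌋`. -/
theorem CV_cycleGraph (n k : ℕ) (hn : 3 ≤ n) (hk : 2 ≤ k) :
    (n / 2 < k → CV (SimpleGraph.cycleGraph n) k = 0) ∧
    (k ≤ n / 2 → CV (SimpleGraph.cycleGraph n) k = (n + k) / (k + 1)) := by
  haveI : NeZero n := ⟨by omega⟩
  constructor
  · -- Part 1 : k > n/2
    intro hkn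
    have h0 : 0 ∈ {c | ∃ V' : Finset (Fin n), V'.card = c ∧
        FailureState ((cycleGraph n).induce ((V' : Set (Fin n)))ᶜ) k} := by
      refine ⟨∅, Finset.card_empty, ?_⟩
      intro u v hr
      by_cases huv : (u : Fin n) = (v : Fin n)
      · have he : u = v := Subtype.ext huv
        subst he
        rw [SimpleGraph.dist_self]
        omega
      · have hsum := fin_sub_val_add hn (x := (v : Fin n)) (y := (u : Fin n))
          (fun hc => huv hc.symm)
        have htriv : ∀ (a b : ↥(((∅ : Finset (Fin n)) : Set (Fin n)))ᶜ),
            ∀ j ≤ (((b : Fin n)) - (a : Fin n)).val,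
            ((a : Fin n) + (j : Fin n)) ∈ (((∅ : Finset (Fin n)) : Set (Fin n)))ᶜ := by
          intro a b j hj
          simp
        rcases le_total ((v : Fin n) - u).val ((u : Fin n) - v).val with hle | hle
        · have := (induce_dist_le hn u v (htriv u v)).2
          omega
        · have := (induce_dist_le hn v u (htriv v u)).2
          rw [SimpleGraph.dist_comm] at this
          omega
    have h1 : CV (cycleGraph n) k ≤ 0 := Nat.sInf_le h0
    omega
  · -- Part 2 : k ≤ n/2
    intro hkn
    have hk1 : 0 < k + 1 := by omega
    have hkn' : k < n := by omega
    set q := (n - 1) / (k + 1) with hq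
    have hdm := Nat.div_add_mod (n - 1) (k + 1)
    rw [← hq] at hdm
    have hmod := Nat.mod_lt (n - 1) hk1
    have hm : (n + k) / (k + 1) = q + 1 := by
      have h2 : n + k = (n - 1) + 1 * (k + 1) := by omega
      rw [h2, Nat.add_mul_div_right _ _ hk1]
    rw [hm]
    -- the deleted set for the upper bound
    set V' : Finset (Fin n) := Finset.univ.filter (fun v : Fin n => (k+1) ∣ v.val) with hV'
    have hcardV' : V'.card = q + 1 := by
      rw [hV', card_multiples_filter (by omega) (by omega)]
    have mem_iff : ∀ x : Fin n, (x ∈ ((V' : Set (Fin n)))ᶜ) ↔ ¬ (k+1) ∣ x.val := by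
      intro x
      simp [hV']
    -- a step lemma for surviving adjacent vertices
    have step : ∀ a b : Fin n, ¬(k+1) ∣ a.val → ¬(k+1) ∣ b.val → (b - a).val = 1 →
        b.val = a.val + 1 ∧ b.val / (k+1) = a.val / (k+1) := by
      intro a b ha hb hba
      have hba' : b - a = 1 := by
        apply Fin.ext
        rw [hba, Fin.val_one' n, Nat.mod_eq_of_lt (by omega)]
      have hb' : b = a + 1 := by linear_combination hba'
      have hval : b.val = (a.val + 1) % n := by
        rw [hb', Fin.val_add, Fin.val_one' n, Nat.mod_eq_of_lt (by omega : 1 < n)]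
      have han : a.val + 1 ≠ n := by
        intro hc
        rw [hc, Nat.mod_self] at hval
        exact hb (hval ▸ Dvd.intro 0 rfl)
      have hval' : b.val = a.val + 1 := by
        rw [hval, Nat.mod_eq_of_lt (by have := a.isLt; omega)]
      refine ⟨hval', ?_⟩
      rw [hval', Nat.succ_div, if_neg (hval' ▸ hb)]
      simp
    have key : ∀ (a b : ↥((V' : Set (Fin n)))ᶜ),
        ((cycleGraph n).induce ((V' : Set (Fin n)))ᶜ).Walk a b →
        (a : Fin n).val / (k+1) = (b : Fin n).val / (k+1) := by
      intro a b w
      induction w with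
      | nil => rfl
      | @cons a x b hadj p ih =>
        have h' : (cycleGraph n).Adj (a : Fin n) (x : Fin n) := hadj
        rw [cycleGraph_adj'] at h'
        have ha := (mem_iff _).mp a.2
        have hx := (mem_iff _).mp x.2
        rcases h' with h' | h'
        · rw [(step (x : Fin n) (a : Fin n) hx ha h').2, ih]
        · rw [← (step (a : Fin n) (x : Fin n) ha hx h').2, ih]
    -- upper bound : V' gives a failure state
    have hFS : FailureState ((cycleGraph n).induce ((V' : Set (Fin n)))ᶜ) k := by
      intro u v hr
      obtain ⟨w⟩ := hr
      have main : ∀ (u v : ↥((V' : Set (Fin n)))ᶜ),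
          ((cycleGraph n).induce ((V' : Set (Fin n)))ᶜ).Walk u v →
          (u : Fin n).val ≤ (v : Fin n).val →
          ((cycleGraph n).induce ((V' : Set (Fin n)))ᶜ).dist u v < k := by
        intro u v w hle
        have hquot := key u v w
        have hu := (mem_iff _).mp u.2
        have hv := (mem_iff _).mp v.2
        have hud := Nat.div_add_mod (u : Fin n).val (k+1)
        have hvd := Nat.div_add_mod (v : Fin n).val (k+1)
        set i := (u : Fin n).val / (k+1) with hi
        rw [← hquot] at hvd
        have hexp : (k+1) * (i+1) = (k+1) * i + (k+1) := by ring
        have humod : (u : Fin n).val % (k+1) ≠ 0 := fun hc =>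
          hu (Nat.dvd_iff_mod_eq_zero.mpr hc)
        have hvmod : (v : Fin n).val % (k+1) ≠ 0 := fun hc =>
          hv (Nat.dvd_iff_mod_eq_zero.mpr hc)
        have humod' := Nat.mod_lt (u : Fin n).val hk1
        have hvmod' := Nat.mod_lt (v : Fin n).val hk1
        have hd : (v : Fin n).val - (u : Fin n).val ≤ k - 1 := by omega
        have hvu : ((v : Fin n) - (u : Fin n)).val = (v : Fin n).val - (u : Fin n).val :=
          Fin.sub_val_of_le (Fin.le_def.mpr hle)
        have hsupp : ∀ j ≤ ((v : Fin n) - (u : Fin n)).val,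
            ((u : Fin n) + (j : Fin n)) ∈ ((V' : Set (Fin n)))ᶜ := by
          intro j hj
          rw [hvu] at hj
          have hjn : j < n := by omega
          have hval : ((u : Fin n) + (j : Fin n)).val = (u : Fin n).val + j := by
            rw [Fin.val_add, Fin.val_natCast, Nat.mod_eq_of_lt hjn,
              Nat.mod_eq_of_lt (by have := (v : Fin n).isLt; omega)]
          rw [mem_iff, hval]
          intro hdvd
          obtain ⟨c, hc⟩ := hdvd
          have hlb : (k+1) * i < (k+1) * c := by omega
          have hub : (k+1) * c < (k+1) * (i + 1) := by omega
          have h1 := Nat.lt_of_mul_lt_mul_left hlb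
          have h2 := Nat.lt_of_mul_lt_mul_left hub
          omega
        have := (induce_dist_le hn u v hsupp).2
        omega
      rcases le_total (u : Fin n).val (v : Fin n).val with hle | hle
      · exact main u v w hle
      · rw [SimpleGraph.dist_comm]
        exact main v u w.reverse hle
    have hmem : q + 1 ∈ {c | ∃ V' : Finset (Fin n), V'.card = c ∧
        FailureState ((cycleGraph n).induce ((V' : Set (Fin n)))ᶜ) k} :=
      ⟨V', hcardV', hFS⟩
    -- lower bound
    have hlow : ∀ c ∈ {c | ∃ V' : Finset (Fin n), V'.card = c ∧
        FailureState ((cycleGraph n).induce ((V' : Set (Fin n)))ᶜ) k}, q + 1 ≤ c := by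
      rintro c ⟨W, hWcard, hWfs⟩
      by_contra hcon
      push_neg at hcon
      have hcq : c ≤ q := by omega
      have hsize : c * (k+1) ≤ n - 1 := by
        calc c * (k+1) ≤ q * (k+1) := Nat.mul_le_mul_right _ hcq
        _ = (k+1) * q := Nat.mul_comm _ _
        _ ≤ n - 1 := by omega
      -- pigeonhole : some window of k+1 consecutive vertices avoids W
      have hexists : ∃ p : Fin n, ∀ i ≤ k, (p + (i : Fin n)) ∉ W := by
        by_contra hcon2
        push_neg at hcon2
        choose g hg1 hg2 using hcon2
        have hcard2 : (Finset.univ : Finset (Fin n)).card ≤ (k+1) * W.card := by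
          apply Finset.card_le_mul_card_image_of_maps_to
            (f := fun p : Fin n => p + ((g p : ℕ) : Fin n))
          · intro p _
            exact hg2 p
          · intro b hb
            refine le_trans (Finset.card_le_card_of_injOn (t := Finset.range (k+1)) g ?_ ?_)
              (by simp)
            · intro p _
              exact Finset.mem_range.mpr (by have := hg1 p; omega)
            · intro p hp p' hp' hgg
              simp only [Finset.coe_filter, Set.mem_setOf_eq] at hp hp'
              have h1 : p + ((g p : ℕ) : Fin n) = p' + ((g p' : ℕ) : Fin n) := by
                rw [hp.2, hp'.2]
              rw [hgg] at h1
              exact add_right_cancel h1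
        rw [Finset.card_univ, Fintype.card_fin] at hcard2
        have hcomm : (k+1) * W.card = c * (k+1) := by rw [hWcard]; ring
        omega
      obtain ⟨p, hp⟩ := hexists
      have hp0 : p ∈ ((W : Set (Fin n)))ᶜ := by
        have := hp 0 (by omega)
        simpa using this
      have hpk : (p + (k : Fin n)) ∈ ((W : Set (Fin n)))ᶜ := by
        have := hp k (le_refl _)
        simpa using this
      set u : ↥((W : Set (Fin n)))ᶜ := ⟨p, hp0⟩ with hu
      set v : ↥((W : Set (Fin n)))ᶜ := ⟨p + (k : Fin n), hpk⟩ with hv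
      have hkval : ((k : ℕ) : Fin n).val = k := by
        rw [Fin.val_natCast, Nat.mod_eq_of_lt hkn']
      have hvu : ((v : Fin n) - (u : Fin n)).val = k := by
        have : (v : Fin n) - (u : Fin n) = ((k : ℕ) : Fin n) := by
          rw [hu, hv]
          ring
        rw [this, hkval]
      have hsupp : ∀ j ≤ ((v : Fin n) - (u : Fin n)).val,
          ((u : Fin n) + (j : Fin n)) ∈ ((W : Set (Fin n)))ᶜ := by
        intro j hj
        rw [hvu] at hj
        have := hp j hj
        simpa using this
      obtain ⟨hreach, _⟩ := induce_dist_le hn u v hsupp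
      have hdlt := hWfs u v hreach
      obtain ⟨hreach2, hdle⟩ := dist_le_induce_dist hreach
      -- now get a contradiction : any walk in the cycle from p to p+k has length ≥ k
      obtain ⟨w0, hw0⟩ := hreach2.exists_walk_length_eq_dist
      obtain ⟨a, b, hab, hsub⟩ := cyc_walk_sub hn w0
      have hsub' : (a : Fin n) - (b : Fin n) = ((k : ℕ) : Fin n) := by
        rw [hsub, hu, hv]
        ring
      have hklen : k ≤ w0.length := by
        rcases le_total b a with hba | hba
        · have : ((a - b : ℕ) : Fin n) = ((k : ℕ) : Fin n) := by
            push_cast [Nat.cast_sub hba]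
            exact hsub'
          have hmod : (a - b) % n = k := by
            have := congrArg Fin.val this
            rwa [Fin.val_natCast, Fin.val_natCast, Nat.mod_eq_of_lt hkn'] at this
          have := Nat.mod_le (a - b) n
          omega
        · have : ((b - a : ℕ) : Fin n) = -((k : ℕ) : Fin n) := by
            push_cast [Nat.cast_sub hba]
            linear_combination -hsub'
          have hnz : (0 : Fin n) ≠ ((k : ℕ) : Fin n) := by
            intro hc
            have := congrArg Fin.val hc
            rw [Fin.val_natCast, Nat.mod_eq_of_lt hkn'] at this
            simp at this
            omega
          have hneg := fin_sub_val_add hn (x := (0 : Fin n)) (y := ((k : ℕ) : Fin n)) hnz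
          rw [zero_sub, sub_zero, hkval] at hneg
          have hmod : (b - a) % n = (-((k : ℕ) : Fin n)).val := by
            have h2 := congrArg Fin.val this
            rwa [Fin.val_natCast] at h2
          have := Nat.mod_le (b - a) n
          omega
      rw [hw0] at hklen
      omega
    have hle1 : CV (cycleGraph n) k ≤ q + 1 := Nat.sInf_le hmem
    have hle2 : q + 1 ≤ CV (cycleGraph n) k := le_csInf ⟨q+1, hmem⟩ hlow
    omega
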